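/- Consider the function F(n₁, n₂) = 3 − √(1 − n₁²) − √(1 − n₂²) − √(n₁² + n₂²) on the closed unit disk D = {(n₁,n₂) : n₁² + n₂² ≤ 1}. Then F attains its minimum value 3 − 3·√(2/3) = 3 − √6 exactly at the four points (±1/√3, ±1/√3). -/
import Mathlib

lemma aux_3sq : (3:ℝ) * Real.sqrt (2/3) = Real.sqrt 6 := by
  rw [show (6:ℝ) = 3^2 * (2/3) by norm_num, Real.sqrt_mul (by positivity),
    Real.sqrt_sq (by norm_num : (0:ℝ) ≤ 3)]

lemma aux_le (x y : ℝ) (h : x ^ 2 + y ^ 2 ≤ 1) :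
    Real.sqrt (1 - x ^ 2) + Real.sqrt (1 - y ^ 2) + Real.sqrt (x ^ 2 + y ^ 2)
      ≤ Real.sqrt 6 := by
  set a := Real.sqrt (1 - x ^ 2) with ha
  set b := Real.sqrt (1 - y ^ 2) with hb
  set c := Real.sqrt (x ^ 2 + y ^ 2) with hc
  have ha0 : 0 ≤ a := Real.sqrt_nonneg _
  have hb0 : 0 ≤ b := Real.sqrt_nonneg _
  have hc0 : 0 ≤ c := Real.sqrt_nonneg _
  have ha2 : a ^ 2 = 1 - x ^ 2 := Real.sq_sqrt (by nlinarith [sq_nonneg y])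
  have hb2 : b ^ 2 = 1 - y ^ 2 := Real.sq_sqrt (by nlinarith [sq_nonneg x])
  have hc2 : c ^ 2 = x ^ 2 + y ^ 2 := Real.sq_sqrt (by positivity)
  have hsum : (a + b + c) ^ 2 ≤ 6 := by
    nlinarith [sq_nonneg (a - b), sq_nonneg (b - c), sq_nonneg (a - c)]
  calc a + b + c = Real.sqrt ((a + b + c) ^ 2) := (Real.sqrt_sq (by linarith)).symm
    _ ≤ Real.sqrt 6 := Real.sqrt_le_sqrt hsum

lemma aux_inv3 : (1 / Real.sqrt 3 : ℝ) ^ 2 = 1/3 := by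
  rw [div_pow, Real.sq_sqrt (by norm_num : (0:ℝ) ≤ 3)]; norm_num

/-- The cube surface energy
`F(n₁,n₂) = 3 − √(1−n₁²) − √(1−n₂²) − √(n₁²+n₂²)` on the closed unit disk attains
its minimum value `3 − 3√(2/3) = 3 − √6` exactly at the four points `(±1/√3, ±1/√3)`. -/
theorem stmt12 (F : ℝ → ℝ → ℝ)
    (hF : F = fun x y =>
      3 - Real.sqrt (1 - x ^ 2) - Real.sqrt (1 - y ^ 2) - Real.sqrt (x ^ 2 + y ^ 2)) :
    ((3 : ℝ) - 3 * Real.sqrt (2/3) = 3 - Real.sqrt 6) ∧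
    (∀ x y : ℝ, x ^ 2 + y ^ 2 ≤ 1 → 3 - Real.sqrt 6 ≤ F x y) ∧
    (∀ x y : ℝ, x ^ 2 + y ^ 2 ≤ 1 →
      (F x y = 3 - Real.sqrt 6 ↔
        (x = 1 / Real.sqrt 3 ∨ x = -(1 / Real.sqrt 3)) ∧
        (y = 1 / Real.sqrt 3 ∨ y = -(1 / Real.sqrt 3)))) := by
  subst hF
  refine ⟨by linarith [aux_3sq], ?_, ?_⟩
  · intro x y h
    simp only
    linarith [aux_le x y h]
  · intro x y h
    simp only
    constructor
    · intro heq
      set a := Real.sqrt (1 - x ^ 2) with ha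
      set b := Real.sqrt (1 - y ^ 2) with hb
      set c := Real.sqrt (x ^ 2 + y ^ 2) with hc
      have ha2 : a ^ 2 = 1 - x ^ 2 := Real.sq_sqrt (by nlinarith [sq_nonneg y])
      have hb2 : b ^ 2 = 1 - y ^ 2 := Real.sq_sqrt (by nlinarith [sq_nonneg x])
      have hc2 : c ^ 2 = x ^ 2 + y ^ 2 := Real.sq_sqrt (by positivity)
      have hs : a + b + c = Real.sqrt 6 := by linarith
      have hs2 : (a + b + c) ^ 2 = 6 := by
        rw [hs, Real.sq_sqrt]; norm_num
      have hsq : a ^ 2 + b ^ 2 + c ^ 2 = 2 := by linarith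
      have key : (a - b) ^ 2 + (b - c) ^ 2 + (a - c) ^ 2
          = 3 * (a ^ 2 + b ^ 2 + c ^ 2) - (a + b + c) ^ 2 := by ring
      rw [hs2, hsq] at key
      have hab : (a - b) ^ 2 = 0 := by
        nlinarith [sq_nonneg (b - c), sq_nonneg (a - c)]
      have hac : (a - c) ^ 2 = 0 := by
        nlinarith [sq_nonneg (b - c), sq_nonneg (a - b)]
      have hab' : a = b := by
        have := pow_eq_zero_iff (n := 2) (by norm_num) |>.mp hab
        linarith
      have hac' : a = c := by
        have := pow_eq_zero_iff (n := 2) (by norm_num) |>.mp hac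
        linarith
      have e1 : 1 - x ^ 2 = 1 - y ^ 2 := by rw [← ha2, ← hb2, hab']
      have e2 : 1 - x ^ 2 = x ^ 2 + y ^ 2 := by rw [← ha2, ← hc2, hac']
      have hx2 : x ^ 2 = 1/3 := by linarith
      have hy2 : y ^ 2 = 1/3 := by linarith
      constructor
      · have : x ^ 2 = (1 / Real.sqrt 3) ^ 2 := by rw [aux_inv3, hx2]
        have := sq_eq_sq_iff_eq_or_eq_neg.mp this
        tauto
      · have : y ^ 2 = (1 / Real.sqrt 3) ^ 2 := by rw [aux_inv3, hy2]
        have := sq_eq_sq_iff_eq_or_eq_neg.mp this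
        tauto
    · rintro ⟨hx, hy⟩
      have hx2 : x ^ 2 = 1/3 := by
        rcases hx with h' | h' <;> rw [h'] <;> simp [neg_pow, aux_inv3]
      have hy2 : y ^ 2 = 1/3 := by
        rcases hy with h' | h' <;> rw [h'] <;> simp [neg_pow, aux_inv3]
      rw [hx2, hy2, show (1:ℝ) - 1/3 = 2/3 by norm_num,
        show (1:ℝ)/3 + 1/3 = 2/3 by norm_num]
      linarith [aux_3sq]
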